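/- Let p ≥ 2 be an even integer and c ≥ 0 a real number. The sequence {Q_{p,c}^n(0)}_{n≥1} of iterates of Q_{p,c}(x) = x^p + c starting at 0 is bounded if and only if c ≤ (p-1)/p^{p/(p-1)}. -/

import Mathlib

open Real

theorem stmt_5 (p : ℕ) (hp : 2 ≤ p) (hpe : Even p) (c : ℝ) (hc : 0 ≤ c) :
    (∃ M : ℝ, ∀ n : ℕ, 1 ≤ n → |(fun x : ℝ => x ^ p + c)^[n] 0| ≤ M) ↔
      c ≤ ((p : ℝ) - 1) / (p : ℝ) ^ ((p : ℝ) / ((p : ℝ) - 1)) := by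
  have hP : (2:ℝ) ≤ (p:ℝ) := by exact_mod_cast hp
  set P : ℝ := (p:ℝ) with hPdef
  have hP0 : 0 < P := by linarith
  have hP1 : 1 < P := by linarith
  have hPm1 : 0 < P - 1 := by linarith
  set q : ℝ := P / (P - 1) with hqdef
  set cstar : ℝ := (P - 1) / P ^ q with hcsdef
  have hq1 : 1 < q := (one_lt_div hPm1).2 (by linarith)
  have hPq : 0 < P ^ q := rpow_pos_of_pos hP0 q
  have hcs0 : 0 ≤ cstar := div_nonneg (by linarith) hPq.le
  have hconj : P.HolderConjugate q := Real.HolderConjugate.conjExponent hP1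
  -- key inequality: x ≤ x^p + cstar for all x
  have key : ∀ x : ℝ, x ≤ x ^ p + cstar := by
    intro x
    rcases le_or_gt x 0 with hx | hx
    · have h1 : 0 ≤ x ^ p := hpe.pow_nonneg x
      linarith
    · have hx0 : 0 ≤ x := hx.le
      have ha : (0:ℝ) ≤ x * P ^ ((1:ℝ)/P) := by positivity
      have hb : (0:ℝ) ≤ P ^ (-(1:ℝ)/P) := (rpow_pos_of_pos hP0 _).le
      have hy := Real.young_inequality_of_nonneg ha hb hconj
      have hab : x * P ^ ((1:ℝ)/P) * P ^ (-(1:ℝ)/P) = x := by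
        rw [mul_assoc, ← rpow_add hP0, ← add_div]
        norm_num
      have haP : (x * P ^ ((1:ℝ)/P)) ^ P / P = x ^ p := by
        rw [mul_rpow hx0 (rpow_nonneg hP0.le _), ← rpow_natCast x p,
          ← rpow_mul hP0.le]
        rw [one_div, inv_mul_cancel₀ hP0.ne', rpow_one, hPdef]
        field_simp
      have hq0 : (0:ℝ) < q := by linarith
      have hbq : (P ^ (-(1:ℝ)/P)) ^ q / q = cstar := by
        rw [← rpow_mul hP0.le]
        have h1 : -(1:ℝ)/P * q = -1/(P-1) := by rw [hqdef]; field_simp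
        have h2 : P ^ (-(1:ℝ)/(P-1)) * P ^ q = P := by
          rw [← rpow_add hP0]
          have h3 : -(1:ℝ)/(P-1) + q = 1 := by rw [hqdef]; field_simp; ring
          rw [h3, rpow_one]
        rw [h1, hcsdef, div_eq_div_iff hq0.ne' hPq.ne']
        rw [show -(1:ℝ)/(P-1) = -1/(P-1) from by ring] at h2
        rw [h2, hqdef]
        field_simp
      rw [hab, haP, hbq] at hy
      exact hy
  set f : ℝ → ℝ := fun x : ℝ => x ^ p + c with hf
  constructor
  · -- bounded → c ≤ cstar
    rintro ⟨M, hM⟩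
    by_contra hcc
    push_neg at hcc
    set δ : ℝ := c - cstar with hδ
    have hδ0 : 0 < δ := by simp [hδ]; linarith
    have grow : ∀ n : ℕ, (n:ℝ) * δ ≤ f^[n] 0 := by
      intro n
      induction n with
      | zero => simp
      | succ k ih =>
        rw [Function.iterate_succ_apply']
        have h1 : f^[k] 0 ≤ (f^[k] 0) ^ p + cstar := key _
        have : f (f^[k] 0) = (f^[k] 0) ^ p + c := rfl
        rw [this]
        push_cast
        nlinarith
    obtain ⟨n, hn⟩ := exists_nat_gt (M / δ)
    have h2 := hM (n+1) (by omega)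
    have h3 := grow (n+1)
    have h4 : M < ((n:ℝ)+1) * δ := by
      rw [div_lt_iff₀ hδ0] at hn
      nlinarith
    have h5 : f^[n+1] 0 ≤ |f^[n+1] 0| := le_abs_self _
    push_cast at h3
    linarith
  · -- c ≤ cstar → bounded by β
    intro hcc
    set β : ℝ := P ^ (-(1:ℝ)/(P-1)) with hβ
    have hβ0 : 0 < β := rpow_pos_of_pos hP0 _
    have hfix : β ^ p + cstar = β := by
      have hb1 : β ^ p = P ^ (-q) := by
        rw [hβ, ← rpow_natCast (P ^ (-(1:ℝ)/(P-1))) p, ← rpow_mul hP0.le, ← hPdef]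
        congr 1
        rw [hqdef]; field_simp
      have hb2 : cstar = (P - 1) * P ^ (-q) := by
        rw [hcsdef, rpow_neg hP0.le, div_eq_mul_inv]
      have h3 : (1:ℝ) + -q = -1/(P-1) := by rw [hqdef]; field_simp; ring
      rw [hb1, hb2, hβ]
      calc P ^ (-q) + (P - 1) * P ^ (-q) = P * P ^ (-q) := by ring
        _ = P ^ ((1:ℝ) + -q) := by rw [rpow_add hP0, rpow_one]
        _ = P ^ (-(1:ℝ)/(P-1)) := by rw [h3]
    refine ⟨β, fun n hn => ?_⟩
    have inv : ∀ n : ℕ, 0 ≤ f^[n] 0 ∧ f^[n] 0 ≤ β := by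
      intro n
      induction n with
      | zero => simp [hβ0.le]
      | succ k ih =>
        rw [Function.iterate_succ_apply']
        have : f (f^[k] 0) = (f^[k] 0) ^ p + c := rfl
        rw [this]
        constructor
        · have := hpe.pow_nonneg (f^[k] 0); linarith
        · have h1 : (f^[k] 0) ^ p ≤ β ^ p :=
            pow_le_pow_left₀ ih.1 ih.2 p
          linarith [hfix]
    rw [abs_of_nonneg (inv n).1]
    exact (inv n).2
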